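/- Let μ > 0 and L ∈ ℝ, and let W : ℝ → ℝ be a differentiable function such that W'(t) ≤ -μ for every t ≥ 0 with W(t) > L. Then W(t) ≤ max(L, W(0) - μ·t) for every t ≥ 0. -/

import Mathlib

/-- Scalar comparison principle underlying Lemma 2: a Lyapunov value that decreases
at rate at least `μ` whenever it exceeds the level `L` satisfies the explicit decay
estimate `W t ≤ max L (W 0 - μ t)`. -/
theorem scalar_comparison_principle
    (μ L : ℝ) (hμ : 0 < μ)
    (W : ℝ → ℝ) (hW : Differentiable ℝ W)
    (hderiv : ∀ t : ℝ, 0 ≤ t → L < W t → deriv W t ≤ -μ) :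
    ∀ t : ℝ, 0 ≤ t → W t ≤ max L (W 0 - μ * t) := by
  intro t ht
  by_cases hWt : W t ≤ L
  · exact le_max_of_le_left hWt
  push_neg at hWt
  -- Claim: W s > L for all s ∈ [0, t]
  have key : ∀ s ∈ Set.Icc (0:ℝ) t, L < W s := by
    by_contra hcon
    push_neg at hcon
    obtain ⟨s₀, hs₀mem, hs₀⟩ := hcon
    set A : Set ℝ := {s | s ∈ Set.Icc (0:ℝ) t ∧ W s ≤ L} with hA
    have hAne : A.Nonempty := ⟨s₀, hs₀mem, hs₀⟩
    have hAclosed : IsClosed A := by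
      have : A = Set.Icc 0 t ∩ W ⁻¹' (Set.Iic L) := by
        ext x; simp [hA, Set.mem_Icc, and_assoc]
      rw [this]
      exact isClosed_Icc.inter (isClosed_Iic.preimage hW.continuous)
    have hAbdd : BddAbove A := ⟨t, fun x hx => hx.1.2⟩
    set s' := sSup A with hs'
    have hs'mem : s' ∈ A := hAclosed.csSup_mem hAne hAbdd
    have hs'0 : 0 ≤ s' := hs'mem.1.1
    have hs't : s' ≤ t := hs'mem.1.2
    have hs'lt : s' < t := lt_of_le_of_ne hs't (fun h => absurd (h ▸ hs'mem.2) (not_le.mpr hWt))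
    -- W > L on (s', t]
    have hgt : ∀ s, s' < s → s ≤ t → L < W s := by
      intro s hs1 hs2
      by_contra h
      push_neg at h
      have : s ∈ A := ⟨⟨le_trans hs'0 hs1.le, hs2⟩, h⟩
      exact absurd (le_csSup hAbdd this) (not_le.mpr hs1)
    -- W antitone on [s', t]
    have hanti : AntitoneOn W (Set.Icc s' t) := by
      apply antitoneOn_of_deriv_nonpos (convex_Icc _ _) hW.continuous.continuousOn
        (fun x _ => (hW x).differentiableWithinAt)
      intro x hx
      rw [interior_Icc] at hx
      have hx0 : 0 ≤ x := le_trans hs'0 hx.1.le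
      exact le_trans (hderiv x hx0 (hgt x hx.1 hx.2.le)) (by linarith)
    have := hanti ⟨le_refl s', hs't⟩ ⟨hs't, le_refl t⟩ hs't
    exact absurd (le_trans this hs'mem.2) (not_le.mpr hWt)
  -- Now deriv W ≤ -μ on interior, so W t + μ t ≤ W 0
  have hanti : AntitoneOn (fun s => W s + μ * s) (Set.Icc 0 t) := by
    apply antitoneOn_of_deriv_nonpos (convex_Icc _ _)
      (hW.continuous.add (continuous_const.mul continuous_id)).continuousOn
      (fun x _ => ((hW x).add (((hasDerivAt_id x).const_mul μ).differentiableAt)).differentiableWithinAt)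
    intro x hx
    rw [interior_Icc] at hx
    have hd : deriv (fun s => W s + μ * s) x = deriv W x + μ := by
      have := ((hW x).hasDerivAt.add ((hasDerivAt_id x).const_mul μ)).deriv
      simp only [mul_one, id] at this ⊢
      exact this
    rw [show (W + (fun _ => μ) * id) = (fun s => W s + μ * s) from rfl, hd]
    have := hderiv x hx.1.le (key x ⟨hx.1.le, hx.2.le⟩)
    linarith
  have := hanti ⟨le_refl 0, ht⟩ ⟨ht, le_refl t⟩ ht
  simp only [mul_zero, add_zero] at this
  have : W t ≤ W 0 - μ * t := by linarith
  exact le_max_of_le_right this
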